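/- Let m ∈ ℕ and let X₁,…,X_m be Banach spaces such that X_j has cotype q_j with 2 ≤ q_j < ∞ for each j = 1,…,m. Then for every Banach space Y and every s > 0 with 1/s ≤ 1/q₁ + ⋯ + 1/q_m, every continuous m-linear mapping T : X₁ × ⋯ × X_m → Y is absolutely (s;1)-summing, i.e., ∑_j ‖T(x_j^{(1)},…,x_j^{(m)})‖^s < ∞ whenever (x_j^{(k)})_j is weakly 1-summable in X_k for each k. -/

import Mathlib

open scoped BigOperators

/-- A sequence in a normed space is *weakly 1-summable*. -/
def WeaklySummable (𝕂 : Type*) [RCLike 𝕂] {X : Type*} [NormedAddCommGroup X]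
    [NormedSpace 𝕂 X] (x : ℕ → X) : Prop :=
  ∀ φ : X →L[𝕂] 𝕂, Summable fun j => ‖φ (x j)‖

/-- A normed space has cotype `q` (Rademacher averages written as an average over signs). -/
def HasCotype (X : Type*) [NormedAddCommGroup X] (q : ℝ) : Prop :=
  ∃ C : ℝ, 0 ≤ C ∧ ∀ (k : ℕ) (x : Fin k → X),
    (∑ j, ‖x j‖ ^ q) ^ (1 / q) ≤
      C * Real.sqrt ((2 ^ k : ℝ)⁻¹ *
        ∑ ε : Fin k → Bool, ‖∑ j, (if ε j then x j else -x j)‖ ^ 2)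


/-- Uniform bound on signed partial sums of a weakly summable sequence. -/
lemma sign_sum_bound (𝕂 : Type*) [RCLike 𝕂] {X : Type*} [NormedAddCommGroup X]
    [NormedSpace 𝕂 X] (x : ℕ → X) (hx : WeaklySummable 𝕂 x) :
    ∃ B : ℝ, 0 ≤ B ∧ ∀ (k : ℕ) (ε : Fin k → Bool),
      ‖∑ j, (if ε j then x j else -x j)‖ ≤ B := by
  set ι := Σ k : ℕ, (Fin k → Bool)
  set g : ι → StrongDual 𝕂 X →L[𝕂] 𝕂 := fun i =>
    NormedSpace.inclusionInDoubleDualLi 𝕂 (∑ j, (if i.2 j then x (j : ℕ) else -x (j : ℕ)))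
  have hpt : ∀ φ : StrongDual 𝕂 X, ∃ C, ∀ i, ‖g i φ‖ ≤ C := by
    intro φ
    refine ⟨∑' j, ‖φ (x j)‖, ?_⟩
    rintro ⟨k, ε⟩
    have : g ⟨k, ε⟩ φ = φ (∑ j, (if ε j then x (j : ℕ) else -x (j : ℕ))) := rfl
    rw [this, map_sum]
    calc ‖∑ j : Fin k, φ (if ε j then x (j : ℕ) else -x (j : ℕ))‖
        ≤ ∑ j : Fin k, ‖φ (if ε j then x (j : ℕ) else -x (j : ℕ))‖ := norm_sum_le _ _
      _ = ∑ j : Fin k, ‖φ (x (j : ℕ))‖ := by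
          refine Finset.sum_congr rfl fun j _ => ?_
          by_cases h : ε j <;> simp [h]
      _ = ∑ j ∈ Finset.range k, ‖φ (x j)‖ :=
          Fin.sum_univ_eq_sum_range (fun j => ‖φ (x j)‖) k
      _ ≤ ∑' j, ‖φ (x j)‖ := Summable.sum_le_tsum _ (fun _ _ => norm_nonneg _) (hx φ)
  obtain ⟨B, hB⟩ := banach_steinhaus hpt
  refine ⟨max B 0, le_max_right _ _, fun k ε => ?_⟩
  have h := hB ⟨k, ε⟩
  rw [(NormedSpace.inclusionInDoubleDualLi 𝕂).norm_map] at h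
  exact h.trans (le_max_left _ _)

/-- Cotype `q` implies the identity is `(q;1)`-summing. -/
lemma key (𝕂 : Type*) [RCLike 𝕂] {X : Type*} [NormedAddCommGroup X]
    [NormedSpace 𝕂 X] {q : ℝ} (hq : 0 < q) (hc : HasCotype X q)
    (x : ℕ → X) (hx : WeaklySummable 𝕂 x) :
    Summable fun j => ‖x j‖ ^ q := by
  obtain ⟨B, hB0, hB⟩ := sign_sum_bound 𝕂 x hx
  obtain ⟨C, hC0, hC⟩ := hc
  refine summable_of_sum_range_le (c := (C * B) ^ q)
    (fun n => Real.rpow_nonneg (norm_nonneg _) _) fun N => ?_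
  have h1 : (∑ j : Fin N, ‖x (j : ℕ)‖ ^ q) ^ (1 / q) ≤ C * B := by
    refine (hC N fun j => x (j : ℕ)).trans ?_
    have hsum : (∑ ε : Fin N → Bool, ‖∑ j, (if ε j then x (j : ℕ) else -x (j : ℕ))‖ ^ 2)
        ≤ 2 ^ N * B ^ 2 := by
      calc (∑ ε : Fin N → Bool, ‖∑ j, (if ε j then x (j : ℕ) else -x (j : ℕ))‖ ^ 2)
          ≤ ∑ _ε : Fin N → Bool, B ^ 2 := by
            refine Finset.sum_le_sum fun ε _ => ?_
            exact pow_le_pow_left₀ (norm_nonneg _) (hB N ε) 2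
        _ = 2 ^ N * B ^ 2 := by
            rw [Finset.sum_const, Finset.card_univ]
            simp [Fintype.card_fun, mul_comm]
    have h2 : Real.sqrt ((2 ^ N : ℝ)⁻¹ *
        ∑ ε : Fin N → Bool, ‖∑ j, (if ε j then x (j : ℕ) else -x (j : ℕ))‖ ^ 2)
        ≤ B := by
      have hpos : (0:ℝ) < 2 ^ N := by positivity
      have : (2 ^ N : ℝ)⁻¹ *
          (∑ ε : Fin N → Bool, ‖∑ j, (if ε j then x (j : ℕ) else -x (j : ℕ))‖ ^ 2)
          ≤ B ^ 2 := by
        have h4 := mul_le_mul_of_nonneg_left hsum (inv_nonneg.mpr hpos.le)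
        rwa [inv_mul_cancel_left₀ hpos.ne'] at h4
      calc Real.sqrt _ ≤ Real.sqrt (B ^ 2) := Real.sqrt_le_sqrt this
        _ = B := by rw [Real.sqrt_sq hB0]
    exact mul_le_mul_of_nonneg_left h2 hC0
  have hS0 : (0:ℝ) ≤ ∑ j : Fin N, ‖x (j : ℕ)‖ ^ q :=
    Finset.sum_nonneg fun j _ => Real.rpow_nonneg (norm_nonneg _) _
  have h3 : (∑ j : Fin N, ‖x (j : ℕ)‖ ^ q) ≤ (C * B) ^ q := by
    have := Real.rpow_le_rpow (Real.rpow_nonneg hS0 _) h1 hq.le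
    rwa [← Real.rpow_mul hS0, one_div_mul_cancel hq.ne', Real.rpow_one] at this
  calc ∑ j ∈ Finset.range N, ‖x j‖ ^ q
      = ∑ j : Fin N, ‖x (j : ℕ)‖ ^ q :=
        (Fin.sum_univ_eq_sum_range (fun j => ‖x j‖ ^ q) N).symm
    _ ≤ (C * B) ^ q := h3

/-- If each `X_j` has cotype `q_j`, then every continuous `m`-linear mapping into any Banach
space `Y` is absolutely `(s;1)`-summing whenever `1/s ≤ ∑ 1/q_k`. -/
theorem stmt7 (𝕂 : Type*) [RCLike 𝕂] (m : ℕ) (hm : 0 < m)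
    (X : Fin m → Type*) [∀ k, NormedAddCommGroup (X k)]
    [∀ k, NormedSpace 𝕂 (X k)] [∀ k, CompleteSpace (X k)]
    (q : Fin m → ℝ) (hq2 : ∀ k, 2 ≤ q k) (hcot : ∀ k, HasCotype (X k) (q k))
    (Y : Type*) [NormedAddCommGroup Y] [NormedSpace 𝕂 Y] [CompleteSpace Y]
    (s : ℝ) (hs : 0 < s) (hs1 : 1 / s ≤ ∑ k, 1 / q k)
    (T : ContinuousMultilinearMap 𝕂 X Y)
    (x : ∀ k, ℕ → X k) (hx : ∀ k, WeaklySummable 𝕂 (x k)) :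
    Summable fun j => ‖T fun k => x k j‖ ^ s := by
  have hq0 : ∀ k, (0:ℝ) < q k := fun k => lt_of_lt_of_le two_pos (hq2 k)
  set a : Fin m → ℕ → ℝ := fun k j => ‖x k j‖ with ha
  have ha0 : ∀ k j, 0 ≤ a k j := fun k j => norm_nonneg _
  have hA : ∀ k, Summable fun j => a k j ^ q k := fun k =>
    key 𝕂 (hq0 k) (hcot k) (x k) (hx k)
  set w : Fin m → ℝ := fun k => s / q k with hw
  have hw0 : ∀ k, 0 < w k := fun k => div_pos hs (hq0 k)
  set t : ℝ := ∑ k, w k with htdef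
  have ht1 : 1 ≤ t := by
    have h1 : (1:ℝ) = s * (1 / s) := by field_simp
    rw [h1, htdef]
    calc s * (1 / s) ≤ s * ∑ k, 1 / q k :=
          mul_le_mul_of_nonneg_left hs1 hs.le
      _ = ∑ k, w k := by
          rw [Finset.mul_sum]
          exact Finset.sum_congr rfl fun k _ => by rw [hw]; field_simp
  have ht0 : 0 < t := lt_of_lt_of_le one_pos ht1
  set u : ℕ → ℝ := fun j => ∑ k, (w k / t) * (a k j ^ q k) with hu
  have hu0 : ∀ j, 0 ≤ u j := fun j =>
    Finset.sum_nonneg fun k _ => mul_nonneg (div_nonneg (hw0 k).le ht0.le)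
      (Real.rpow_nonneg (ha0 k j) _)
  have husum : Summable u := summable_sum fun k _ => (hA k).mul_left _
  -- AM-GM step: `∏ k, a k j ^ s ≤ u j ^ t`
  have hAMGM : ∀ j, (∏ k, a k j ^ s) ≤ u j ^ t := by
    intro j
    have hb0 : ∀ k : Fin m, 0 ≤ (a k j ^ q k) ^ (w k / t) := fun k =>
      Real.rpow_nonneg (Real.rpow_nonneg (ha0 k j) _) _
    have h1 : ∀ k : Fin m, a k j ^ s = ((a k j ^ q k) ^ (w k / t)) ^ t := by
      intro k
      have hqs : q k * (w k / t) * t = s := by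
        rw [hw]
        field_simp
        exact div_self (hq0 k).ne'
      rw [← hqs, Real.rpow_mul (ha0 k j) (q k * (w k / t)) t,
        Real.rpow_mul (ha0 k j) (q k) (w k / t)]
    calc (∏ k, a k j ^ s) = ∏ k, ((a k j ^ q k) ^ (w k / t)) ^ t :=
          Finset.prod_congr rfl fun k _ => h1 k
      _ = (∏ k, (a k j ^ q k) ^ (w k / t)) ^ t :=
          Real.finset_prod_rpow _ _ (fun k _ => hb0 k) t
      _ ≤ u j ^ t := by
          refine Real.rpow_le_rpow (Finset.prod_nonneg fun k _ => hb0 k) ?_ ht0.le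
          refine Real.geom_mean_le_arith_mean_weighted Finset.univ
            (fun k => w k / t) (fun k => a k j ^ q k)
            (fun k _ => div_nonneg (hw0 k).le ht0.le) ?_
            (fun k _ => Real.rpow_nonneg (ha0 k j) _)
          rw [← Finset.sum_div, ← htdef, div_self ht0.ne']
  -- Summability of `u ^ t` by comparison with `K ^ (t-1) * u`
  set K : ℝ := max (∑' j, u j) 1 with hK
  have hK1 : (1:ℝ) ≤ K := le_max_right _ _
  have hK0 : (0:ℝ) < K := lt_of_lt_of_le one_pos hK1
  have huK : ∀ j, u j ≤ K := fun j =>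
    le_trans (Summable.le_tsum husum j fun i _ => hu0 i) (le_max_left _ _)
  have hut : ∀ j, u j ^ t ≤ K ^ (t - 1) * u j := by
    intro j
    rcases eq_or_lt_of_le (hu0 j) with h0 | hpos
    · rw [← h0, Real.zero_rpow ht0.ne', mul_zero]
    · have h2 : u j ^ (t - 1) * u j ^ (1:ℝ) = u j ^ t := by
        rw [← Real.rpow_add hpos, sub_add_cancel]
      rw [← h2, Real.rpow_one]
      refine mul_le_mul_of_nonneg_right ?_ (hu0 j)
      exact Real.rpow_le_rpow (hu0 j) (huK j) (by linarith)
  -- Final comparison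
  refine Summable.of_nonneg_of_le
    (g := fun j => ‖T fun k => x k j‖ ^ s)
    (f := fun j => ‖T‖ ^ s * (K ^ (t - 1) * u j))
    (fun j => Real.rpow_nonneg (norm_nonneg _) _) ?_ ?_
  · intro j
    calc ‖T fun k => x k j‖ ^ s
        ≤ (‖T‖ * ∏ k, a k j) ^ s :=
          Real.rpow_le_rpow (norm_nonneg _) (T.le_opNorm _) hs.le
      _ = ‖T‖ ^ s * ∏ k, a k j ^ s := by
          rw [Real.mul_rpow (norm_nonneg _) (Finset.prod_nonneg fun k _ => ha0 k _),
            ← Real.finset_prod_rpow _ _ (fun k _ => ha0 k _) s]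
      _ ≤ ‖T‖ ^ s * (u j ^ t) :=
          mul_le_mul_of_nonneg_left (hAMGM j) (Real.rpow_nonneg (norm_nonneg _) _)
      _ ≤ ‖T‖ ^ s * (K ^ (t - 1) * u j) :=
          mul_le_mul_of_nonneg_left (hut j) (Real.rpow_nonneg (norm_nonneg _) _)
  · exact ((husum.mul_left _).mul_left _)
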